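/- Among all M×M symmetric positive definite matrices S with fixed trace Tr(S) = T, the quantity Tr(S^{-1}) is minimized exactly when S = (T/M)·I, and the minimum value is M²/T. Consequently, among frames {f_n}_{n=1}^N in R^M with Σ‖f_n‖² = N, tight frames minimize the MSE Tr[(FF*)^{-1}], achieving M²/N. -/

import Mathlib

open Matrix

/-- Tangent-line trick: for positive `lam i` summing to `T`,
`∑ 1/lam i ≥ M²/T`, with equality iff all `lam i = T/M`. -/
lemma sum_inv_key (M : ℕ) (hM : 0 < M) (T : ℝ) (hT : 0 < T) (lam : Fin M → ℝ)
    (hpos : ∀ i, 0 < lam i) (hsum : ∑ i, lam i = T) :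
    (M : ℝ) ^ 2 / T ≤ ∑ i, (lam i)⁻¹ ∧
    ((∑ i, (lam i)⁻¹ = (M : ℝ) ^ 2 / T) ↔ ∀ i, lam i = T / M) := by
  have hM' : (0:ℝ) < M := by exact_mod_cast hM
  set g : Fin M → ℝ := fun i => (lam i)⁻¹ - (2 * M / T - (M / T) ^ 2 * lam i) with hg
  have hgval : ∀ i, g i = (T - M * lam i) ^ 2 / (lam i * T ^ 2) := by
    intro i
    have h1 : lam i ≠ 0 := (hpos i).ne'
    have h2 : T ≠ 0 := hT.ne'
    simp only [hg]
    field_simp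
    ring
  have hgnonneg : ∀ i, 0 ≤ g i := by
    intro i
    rw [hgval i]
    have := hpos i
    positivity
  have hgzero : ∀ i, g i = 0 ↔ lam i = T / M := by
    intro i
    rw [hgval i]
    have hl := hpos i
    have h1 : lam i * T ^ 2 > 0 := by positivity
    rw [div_eq_zero_iff]
    constructor
    · rintro (h | h)
      · have := pow_eq_zero_iff (n := 2) (by norm_num) |>.mp h
        have : T = M * lam i := by linarith
        field_simp [this]
        try ring
        linarith
      · exact absurd h h1.ne'
    · intro h
      left
      rw [h]
      field_simp
      norm_num
  have hsumg : ∑ i, (lam i)⁻¹ = (M : ℝ) ^ 2 / T + ∑ i, g i := by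
    have : ∑ i, g i = ∑ i, (lam i)⁻¹ - ∑ i, (2 * M / T - (M / T) ^ 2 * lam i) := by
      rw [← Finset.sum_sub_distrib]
    rw [this]
    have h2 : ∑ i : Fin M, (2 * M / T - (M / T) ^ 2 * lam i)
        = (M : ℝ) * (2 * M / T) - (M / T) ^ 2 * T := by
      rw [Finset.sum_sub_distrib, Finset.sum_const, ← Finset.mul_sum, hsum]
      simp [Finset.card_univ]
      try ring
    rw [h2]
    have : (M : ℝ) * (2 * M / T) - (M / T) ^ 2 * T = (M : ℝ) ^ 2 / T := by
      field_simp
      ring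
    rw [this]
    ring
  have hsumgnonneg : 0 ≤ ∑ i, g i := Finset.sum_nonneg fun i _ => hgnonneg i
  constructor
  · linarith
  · constructor
    · intro h
      have hzero : ∑ i, g i = 0 := by linarith [hsumg ▸ h]
      have := (Finset.sum_eq_zero_iff_of_nonneg (fun i _ => hgnonneg i)).mp hzero
      intro i
      exact (hgzero i).mp (this i (Finset.mem_univ i))
    · intro h
      have : ∀ i, (lam i)⁻¹ = (M : ℝ) / T := by
        intro i
        rw [h i]
        rw [inv_div]
      rw [Finset.sum_congr rfl fun i _ => this i]
      rw [Finset.sum_const]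
      simp [Finset.card_univ]
      field_simp

/-- Main matrix lemma. -/
lemma trace_inv_min (M : ℕ) (hM : 0 < M) (T : ℝ) (hT : 0 < T)
    (S : Matrix (Fin M) (Fin M) ℝ) (hS : S.PosDef) (htr : Matrix.trace S = T) :
    (M : ℝ) ^ 2 / T ≤ Matrix.trace S⁻¹ ∧
    (Matrix.trace S⁻¹ = (M : ℝ) ^ 2 / T ↔ S = (T / (M : ℝ)) • (1 : Matrix (Fin M) (Fin M) ℝ)) := by
  have hM' : (0:ℝ) < M := by exact_mod_cast hM
  have hHerm : S.IsHermitian := hS.1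
  set U : Matrix (Fin M) (Fin M) ℝ := (hHerm.eigenvectorUnitary : Matrix (Fin M) (Fin M) ℝ) with hU
  set lam : Fin M → ℝ := hHerm.eigenvalues with hlam
  have hpos : ∀ i, 0 < lam i := fun i => hS.eigenvalues_pos i
  have hdiag : (RCLike.ofReal ∘ lam : Fin M → ℝ) = lam := by
    funext i; simp
  have hspec : S = U * Matrix.diagonal lam * star U := by
    have := hHerm.spectral_theorem
    rwa [hdiag] at this
  have hUU : U * star U = 1 := (Matrix.mem_unitaryGroup_iff).mp hHerm.eigenvectorUnitary.2
  have hUU' : star U * U = 1 := (Matrix.mem_unitaryGroup_iff').mp hHerm.eigenvectorUnitary.2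
  -- trace S = ∑ lam
  have htrS : Matrix.trace S = ∑ i, lam i := by
    rw [hspec, Matrix.trace_mul_cycle, hUU', Matrix.one_mul, Matrix.trace_diagonal]
  have hsum : ∑ i, lam i = T := by rw [← htrS, htr]
  -- S⁻¹
  have hSinv : S⁻¹ = U * Matrix.diagonal (fun i => (lam i)⁻¹) * star U := by
    apply Matrix.inv_eq_right_inv
    rw [hspec]
    calc U * Matrix.diagonal lam * star U * (U * Matrix.diagonal (fun i => (lam i)⁻¹) * star U)
        = U * Matrix.diagonal lam * (star U * U) * Matrix.diagonal (fun i => (lam i)⁻¹) * star U := by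
          simp only [Matrix.mul_assoc]
      _ = U * (Matrix.diagonal lam * Matrix.diagonal (fun i => (lam i)⁻¹)) * star U := by
          rw [hUU']; simp only [Matrix.mul_one, Matrix.mul_assoc]
      _ = 1 := by
          rw [Matrix.diagonal_mul_diagonal]
          have : (fun i => lam i * (lam i)⁻¹) = fun _ : Fin M => (1:ℝ) := by
            funext i; exact mul_inv_cancel₀ (hpos i).ne'
          rw [this, Matrix.diagonal_one, Matrix.mul_one, hUU]
  have htrSinv : Matrix.trace S⁻¹ = ∑ i, (lam i)⁻¹ := by
    rw [hSinv, Matrix.trace_mul_cycle, hUU', Matrix.one_mul, Matrix.trace_diagonal]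
  obtain ⟨hineq, hiff⟩ := sum_inv_key M hM T hT lam hpos hsum
  constructor
  · rw [htrSinv]; exact hineq
  · constructor
    · intro h
      have hall : ∀ i, lam i = T / M := hiff.mp (by rw [← htrSinv, h])
      have : Matrix.diagonal lam = (T / (M:ℝ)) • (1 : Matrix (Fin M) (Fin M) ℝ) := by
        have hl : lam = fun _ => T / M := funext hall
        rw [hl]
        ext i j
        by_cases hij : i = j <;>
          simp [hij, Matrix.diagonal_apply, Matrix.one_apply]
      rw [hspec, this]
      rw [Matrix.mul_smul, Matrix.smul_mul, Matrix.mul_one, hUU]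
    · intro h
      have hinv : S⁻¹ = ((M:ℝ) / T) • (1 : Matrix (Fin M) (Fin M) ℝ) := by
        apply Matrix.inv_eq_right_inv
        rw [h, Matrix.smul_mul, Matrix.mul_smul, Matrix.one_mul, smul_smul]
        have : T / (M:ℝ) * ((M:ℝ) / T) = 1 := by
          field_simp
        rw [this, one_smul]
      rw [hinv, Matrix.trace_smul, Matrix.trace_one]
      simp [Finset.card_univ]
      field_simp

theorem tight_frames_minimize_mse (M N : ℕ) (hM : 0 < M) (hN : 0 < N) (T : ℝ) (hT : 0 < T) :
    (∀ S : Matrix (Fin M) (Fin M) ℝ, S.PosDef → Matrix.trace S = T →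
      (M : ℝ) ^ 2 / T ≤ Matrix.trace S⁻¹ ∧
      (Matrix.trace S⁻¹ = (M : ℝ) ^ 2 / T ↔ S = (T / (M : ℝ)) • (1 : Matrix (Fin M) (Fin M) ℝ))) ∧
    (∀ F : Matrix (Fin M) (Fin N) ℝ, (F * F.transpose).PosDef →
      (∑ n : Fin N, ∑ i : Fin M, (F i n) ^ 2 = (N : ℝ)) →
      (M : ℝ) ^ 2 / (N : ℝ) ≤ Matrix.trace (F * F.transpose)⁻¹ ∧
      (Matrix.trace (F * F.transpose)⁻¹ = (M : ℝ) ^ 2 / (N : ℝ) ↔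
        ∃ A : ℝ, F * F.transpose = A • (1 : Matrix (Fin M) (Fin M) ℝ))) := by
  have hN' : (0:ℝ) < N := by exact_mod_cast hN
  constructor
  · intro S hS htr
    exact trace_inv_min M hM T hT S hS htr
  · intro F hF hsum
    have htr : Matrix.trace (F * F.transpose) = (N : ℝ) := by
      rw [Matrix.trace]
      simp only [Matrix.diag_apply, Matrix.mul_apply, Matrix.transpose_apply]
      rw [Finset.sum_comm]
      rw [← hsum]
      congr 1; funext n; congr 1; funext i
      ring
    obtain ⟨hineq, hiff⟩ := trace_inv_min M hM (N:ℝ) hN' (F * F.transpose) hF htr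
    refine ⟨hineq, ?_, ?_⟩
    · intro h
      exact ⟨(N:ℝ) / M, hiff.mp h⟩
    · rintro ⟨A, hA⟩
      have hAval : A = (N:ℝ) / M := by
        have : Matrix.trace (F * F.transpose) = A * M := by
          rw [hA, Matrix.trace_smul, Matrix.trace_one]
          simp [Finset.card_univ]
        rw [htr] at this
        have hM' : (0:ℝ) < M := by exact_mod_cast hM
        field_simp at this ⊢
        linarith
      apply hiff.mpr
      rw [hA, hAval]
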